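/- Let (η,ζ) ∈ L²(Ω)×L²(Ω) and (U,χ) ∈ L²(Ω)×L²(Ω) with χ(x) ∈ [0,1] a.e. Then (η,ζ) belongs to the subdifferential ∂ψ(U,χ) of the functional ψ from the previous context if and only if η = U + χ - θ_Γ + K_Γ·∫_Ω U dx + p₀ a.e. and ζ(x) ∈ U(x) + χ(x) + 1 - 2θ_Γ + ∂I(χ(x)) a.e., where ∂I is the subdifferential of the indicator function of [0,1] on ℝ. -/

import Mathlib

open MeasureTheory Set Classical

/-- The functional `ψ(U,χ) = ∫_Ω [½(U+χ-1)² + (U+2χ)(1-θ_Γ) + I(χ)] dx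
+ (K_Γ/2)(∫_Ω U dx + p₀/K_Γ)² + C_ψ` on `H = L²(Ω) × L²(Ω)`. -/
noncomputable def psi (Ω : Set (Fin 3 → ℝ)) (KΓ p₀ θΓ Cψ : ℝ)
    (v : Lp ℝ 2 (volume.restrict Ω) × Lp ℝ 2 (volume.restrict Ω)) : EReal :=
  if (∀ᵐ x ∂(volume.restrict Ω), v.2 x ∈ Icc (0:ℝ) 1) then
    (((∫ x, ((1 / 2) * (v.1 x + v.2 x - 1) ^ 2 + (v.1 x + 2 * v.2 x) * (1 - θΓ))
          ∂(volume.restrict Ω)) +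
      (KΓ / 2) * ((∫ x, v.1 x ∂(volume.restrict Ω)) + p₀ / KΓ) ^ 2 + Cψ : ℝ) : EReal)
  else ⊤

/-- The subdifferential of the indicator function of `[0,1] ⊂ ℝ`. -/
def subI (χ : ℝ) : Set ℝ := {η | ∀ y ∈ Icc (0:ℝ) 1, η * (y - χ) ≤ 0}

section Aux
variable {α : Type*} [MeasurableSpace α] {μ : Measure α}

lemma intmul {f g : α → ℝ} (hf : MemLp f 2 μ) (hg : MemLp g 2 μ) :
    Integrable (fun x => f x * g x) μ := by
  have h := L2.integrable_inner (𝕜 := ℝ) (hf.toLp f) (hg.toLp g)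
  refine h.congr ?_
  filter_upwards [hf.coeFn_toLp, hg.coeFn_toLp] with x hx hy
  simp [hx, hy, RCLike.inner_apply, mul_comm]

lemma gint [IsFiniteMeasure μ] (θΓ : ℝ) {u c : α → ℝ}
    (hu : MemLp u 2 μ) (hc : MemLp c 2 μ) :
    Integrable (fun x => 1/2 * (u x + c x - 1)^2 + (u x + 2*c x) * (1-θΓ)) μ := by
  have h1 : MemLp (fun x => u x + c x - 1) 2 μ := (hu.add hc).sub (memLp_const 1)
  have h2 : Integrable (fun x => (u x + c x - 1) * (u x + c x - 1)) μ := intmul h1 h1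
  have h3 : Integrable (fun x => u x + 2 * c x) μ :=
    (hu.add (hc.const_mul 2)).integrable one_le_two
  have h4 : Integrable (fun x => 1/2 * ((u x + c x - 1) * (u x + c x - 1))
      + (u x + 2 * c x) * (1-θΓ)) μ := (h2.const_mul (1/2)).add (h3.mul_const (1-θΓ))
  refine h4.congr (Filter.Eventually.of_forall fun x => ?_)
  ring

lemma master [IsFiniteMeasure μ] (θΓ : ℝ) {u c v ξ : α → ℝ}
    (hu : MemLp u 2 μ) (hc : MemLp c 2 μ) (hv : MemLp v 2 μ) (hξ : MemLp ξ 2 μ) :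
    ∫ x, (1/2 * (v x + ξ x - 1)^2 + (v x + 2*ξ x) * (1-θΓ)) ∂μ
    = (∫ x, (1/2 * (u x + c x - 1)^2 + (u x + 2*c x) * (1-θΓ)) ∂μ)
      + ((∫ x, (u x + c x - θΓ) * (v x - u x) ∂μ)
      + (∫ x, (u x + c x + 1 - 2*θΓ) * (ξ x - c x) ∂μ)
      + (∫ x, 1/2 * ((v x - u x) + (ξ x - c x))^2 ∂μ)) := by
  have hw1 : MemLp (fun x => u x + c x - θΓ) 2 μ := (hu.add hc).sub (memLp_const θΓ)
  have hw2 : MemLp (fun x => u x + c x + 1 - 2*θΓ) 2 μ :=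
    ((hu.add hc).add (memLp_const 1)).sub (memLp_const (2*θΓ))
  have hvu : MemLp (fun x => v x - u x) 2 μ := hv.sub hu
  have hξc : MemLp (fun x => ξ x - c x) 2 μ := hξ.sub hc
  have hd : MemLp (fun x => (v x - u x) + (ξ x - c x)) 2 μ := hvu.add hξc
  have i1 : Integrable (fun x => (u x + c x - θΓ) * (v x - u x)) μ := intmul hw1 hvu
  have i2 : Integrable (fun x => (u x + c x + 1 - 2*θΓ) * (ξ x - c x)) μ := intmul hw2 hξc
  have i3 : Integrable (fun x => 1/2 * ((v x - u x) + (ξ x - c x))^2) μ := by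
    have h := (intmul hd hd).const_mul (1/2)
    refine h.congr (Filter.Eventually.of_forall fun x => ?_); ring
  have i0 : Integrable (fun x => 1/2 * (u x + c x - 1)^2 + (u x + 2*c x) * (1-θΓ)) μ :=
    gint θΓ hu hc
  have i23 : Integrable (fun x => (u x + c x + 1 - 2*θΓ) * (ξ x - c x)
      + 1/2 * ((v x - u x) + (ξ x - c x))^2) μ := i2.add i3
  have i123 : Integrable (fun x => (u x + c x - θΓ) * (v x - u x)
      + ((u x + c x + 1 - 2*θΓ) * (ξ x - c x)
        + 1/2 * ((v x - u x) + (ξ x - c x))^2)) μ := i1.add i23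
  have key : (fun x => 1/2 * (v x + ξ x - 1)^2 + (v x + 2*ξ x) * (1-θΓ))
      = fun x => (1/2 * (u x + c x - 1)^2 + (u x + 2*c x) * (1-θΓ))
        + ((u x + c x - θΓ) * (v x - u x)
          + ((u x + c x + 1 - 2*θΓ) * (ξ x - c x)
          + 1/2 * ((v x - u x) + (ξ x - c x))^2)) := by
    funext x; ring
  rw [key, integral_add i0 i123, integral_add i1 i23, integral_add i2 i3]
  ring

lemma step2 [IsFiniteMeasure μ] {ρ χ : α → ℝ} (hρ : MemLp ρ 2 μ) (hχ : MemLp χ 2 μ)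
    (hχr : ∀ᵐ x ∂μ, χ x ∈ Icc (0:ℝ) 1) (y : ℝ) (hy : y ∈ Icc (0:ℝ) 1)
    (key : ∀ g : α → ℝ, MemLp g 2 μ → (∀ᵐ x ∂μ, g x ∈ Icc (0:ℝ) 1) →
      ∫ x, ρ x * (g x - χ x) ∂μ ≤ (1/2) * ∫ x, (g x - χ x)^2 ∂μ) :
    ∀ᵐ x ∂μ, ρ x * (y - χ x) ≤ 0 := by
  have hρm := hρ.aestronglyMeasurable
  have hχm := hχ.aestronglyMeasurable
  set ρm := hρm.mk ρ with hρmdef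
  set χm := hχm.mk χ with hχmdef
  have hρae : ρ =ᵐ[μ] ρm := hρm.ae_eq_mk
  have hχae : χ =ᵐ[μ] χm := hχm.ae_eq_mk
  have hρmeas : Measurable ρm := hρm.measurable_mk
  have hχmeas : Measurable χm := hχm.measurable_mk
  set A : Set α := {x | 0 < ρm x * (y - χm x)} with hAdef
  have hA : MeasurableSet A :=
    measurableSet_lt measurable_const (hρmeas.mul (measurable_const.sub hχmeas))
  have hind : MemLp (fun x => A.indicator (fun z => y - χ z) x) 2 μ :=
    MemLp.indicator hA ((memLp_const y).sub hχ)
  have hP : ∫ x, ρ x * A.indicator (fun z => y - χ z) x ∂μ ≤ 0 := by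
    have hQint : Integrable (fun x => (A.indicator (fun z => y - χ z) x)^2) μ := by
      have h := intmul hind hind
      refine h.congr (Filter.Eventually.of_forall fun x => ?_); ring
    set Q : ℝ := (1/2) * ∫ x, (A.indicator (fun z => y - χ z) x)^2 ∂μ with hQdef
    have habs : ∀ t : ℝ, 0 < t → t ≤ 1 →
        t * ∫ x, ρ x * A.indicator (fun z => y - χ z) x ∂μ ≤ t^2 * Q := by
      intro t ht ht1
      have hg : MemLp (fun x => χ x + t * A.indicator (fun z => y - χ z) x) 2 μ :=
        hχ.add (hind.const_mul t)
      have hgr : ∀ᵐ x ∂μ, χ x + t * A.indicator (fun z => y - χ z) x ∈ Icc (0:ℝ) 1 := by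
        filter_upwards [hχr] with x hx
        by_cases hxA : x ∈ A
        · rw [indicator_of_mem hxA]
          constructor <;> nlinarith [hx.1, hx.2, hy.1, hy.2]
        · rw [indicator_of_notMem hxA]; simpa using hx
      have h := key _ hg hgr
      calc t * ∫ x, ρ x * A.indicator (fun z => y - χ z) x ∂μ
          = ∫ x, ρ x * ((χ x + t * A.indicator (fun z => y - χ z) x) - χ x) ∂μ := by
            rw [← integral_const_mul]
            congr 1; funext x; ring
        _ ≤ (1/2) * ∫ x, ((χ x + t * A.indicator (fun z => y - χ z) x) - χ x)^2 ∂μ := h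
        _ = t^2 * Q := by
            rw [hQdef,
              show ∫ x, ((χ x + t * A.indicator (fun z => y - χ z) x) - χ x)^2 ∂μ
                = ∫ x, t^2 * (A.indicator (fun z => y - χ z) x)^2 ∂μ from by
                  congr 1; funext x; ring,
              integral_const_mul]
            ring
    refine le_of_forall_pos_le_add fun ε hε => ?_
    set t : ℝ := min 1 (ε / (|Q| + 1)) with htdef
    have ht0 : 0 < t := lt_min one_pos (div_pos hε (by positivity))
    have ht1 : t ≤ 1 := min_le_left _ _
    have h := habs t ht0 ht1
    have h2 : ∫ x, ρ x * A.indicator (fun z => y - χ z) x ∂μ ≤ t * Q := by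
      have h3 : t * ∫ x, ρ x * A.indicator (fun z => y - χ z) x ∂μ ≤ t * (t * Q) := by
        nlinarith
      exact le_of_mul_le_mul_left h3 ht0
    have h3 : t * Q ≤ ε := by
      calc t * Q ≤ t * |Q| := by nlinarith [le_abs_self Q, ht0.le]
        _ ≤ (ε / (|Q| + 1)) * |Q| := by
            have := min_le_right 1 (ε / (|Q| + 1))
            nlinarith [abs_nonneg Q]
        _ ≤ ε := by
            rw [div_mul_eq_mul_div, div_le_iff₀ (by positivity : (0:ℝ) < |Q| + 1)]
            nlinarith [abs_nonneg Q]
    linarith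
  have hint : Integrable (fun x => ρ x * A.indicator (fun z => y - χ z) x) μ :=
    intmul hρ hind
  have hfae : (fun x => ρ x * A.indicator (fun z => y - χ z) x)
      =ᵐ[μ] fun x => A.indicator (fun z => ρm z * (y - χm z)) x := by
    filter_upwards [hρae, hχae] with x h1 h2
    by_cases hxA : x ∈ A
    · rw [indicator_of_mem hxA, indicator_of_mem hxA, h1, h2]
    · rw [indicator_of_notMem hxA, indicator_of_notMem hxA, mul_zero]
  have hint2 : Integrable (fun x => A.indicator (fun z => ρm z * (y - χm z)) x) μ :=
    hint.congr hfae
  have hP2 : ∫ x, A.indicator (fun z => ρm z * (y - χm z)) x ∂μ ≤ 0 := by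
    rw [← integral_congr_ae hfae]; exact hP
  have hnonneg : 0 ≤ᵐ[μ] fun x => A.indicator (fun z => ρm z * (y - χm z)) x := by
    refine Filter.Eventually.of_forall fun x => ?_
    show (0:ℝ) ≤ A.indicator (fun z => ρm z * (y - χm z)) x
    by_cases hxA : x ∈ A
    · rw [indicator_of_mem hxA]; exact le_of_lt hxA
    · rw [indicator_of_notMem hxA]
  have hzero : (fun x => A.indicator (fun z => ρm z * (y - χm z)) x) =ᵐ[μ] 0 :=
    (integral_eq_zero_iff_of_nonneg_ae hnonneg hint2).mp
      (le_antisymm hP2 (integral_nonneg_of_ae hnonneg))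
  filter_upwards [hzero, hρae, hχae] with x h0 h1 h2
  rw [h1, h2]
  have h0' : A.indicator (fun z => ρm z * (y - χm z)) x = 0 := h0
  by_cases hxA : x ∈ A
  · rw [indicator_of_mem hxA] at h0'
    exact le_of_eq h0'
  · exact not_lt.mp hxA

end Aux

lemma psi_eval (Ω : Set (Fin 3 → ℝ)) (KΓ p₀ θΓ Cψ : ℝ)
    (V Ξ : Lp ℝ 2 (volume.restrict Ω))
    (h : ∀ᵐ x ∂(volume.restrict Ω), Ξ x ∈ Icc (0:ℝ) 1) :
    psi Ω KΓ p₀ θΓ Cψ (V, Ξ) =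
      (((∫ x, ((1 / 2) * (V x + Ξ x - 1) ^ 2 + (V x + 2 * Ξ x) * (1 - θΓ))
          ∂(volume.restrict Ω)) +
        (KΓ / 2) * ((∫ x, V x ∂(volume.restrict Ω)) + p₀ / KΓ) ^ 2 + Cψ : ℝ) : EReal) :=
  if_pos h

lemma psi_top (Ω : Set (Fin 3 → ℝ)) (KΓ p₀ θΓ Cψ : ℝ)
    (V Ξ : Lp ℝ 2 (volume.restrict Ω))
    (h : ¬ (∀ᵐ x ∂(volume.restrict Ω), Ξ x ∈ Icc (0:ℝ) 1)) :
    psi Ω KΓ p₀ θΓ Cψ (V, Ξ) = ⊤ := if_neg h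

/-- characterization (eg7) of the subdifferential of `ψ`: for
`χ ∈ [0,1]` a.e., `(η,ζ) ∈ ∂ψ(U,χ)` iff
`η = U + χ - θ_Γ + K_Γ ∫_Ω U + p₀` a.e. and
`ζ ∈ U + χ + 1 - 2θ_Γ + ∂I(χ)` a.e. -/
theorem stmt19 (Ω : Set (Fin 3 → ℝ)) (hΩmeas : MeasurableSet Ω)
    (hΩbdd : Bornology.IsBounded Ω) (hΩpos : 0 < volume Ω)
    (KΓ p₀ θΓ Cψ : ℝ) (hKΓ : 0 < KΓ)
    (U χ η ζ : Lp ℝ 2 (volume.restrict Ω))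
    (hχrange : ∀ᵐ x ∂(volume.restrict Ω), χ x ∈ Icc (0:ℝ) 1) :
    (∀ V Ξ : Lp ℝ 2 (volume.restrict Ω),
        psi Ω KΓ p₀ θΓ Cψ (U, χ) +
            (((inner ℝ η (V - U) : ℝ) + (inner ℝ ζ (Ξ - χ) : ℝ) : ℝ) : EReal) ≤
          psi Ω KΓ p₀ θΓ Cψ (V, Ξ)) ↔
      ((∀ᵐ x ∂(volume.restrict Ω),
          η x = U x + χ x - θΓ + KΓ * (∫ x', U x' ∂(volume.restrict Ω)) + p₀) ∧
        (∀ᵐ x ∂(volume.restrict Ω),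
          ζ x - (U x + χ x + 1 - 2 * θΓ) ∈ subI (χ x))) := by
  haveI hfin : IsFiniteMeasure (volume.restrict Ω) :=
    ⟨by rw [Measure.restrict_apply_univ]; exact hΩbdd.measure_lt_top⟩
  have hUm : MemLp (⇑U) 2 (volume.restrict Ω) := Lp.memLp U
  have hχm : MemLp (⇑χ) 2 (volume.restrict Ω) := Lp.memLp χ
  have hηm : MemLp (⇑η) 2 (volume.restrict Ω) := Lp.memLp η
  have hζm : MemLp (⇑ζ) 2 (volume.restrict Ω) := Lp.memLp ζ
  have hw1 : MemLp (fun x => U x + χ x - θΓ) 2 (volume.restrict Ω) :=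
    (hUm.add hχm).sub (memLp_const θΓ)
  have hw2 : MemLp (fun x => U x + χ x + 1 - 2*θΓ) 2 (volume.restrict Ω) :=
    ((hUm.add hχm).add (memLp_const 1)).sub (memLp_const (2*θΓ))
  have iU : Integrable (⇑U) (volume.restrict Ω) := hUm.integrable one_le_two
  have hinner : ∀ f g : Lp ℝ 2 (volume.restrict Ω),
      (inner ℝ f g : ℝ) = ∫ x, f x * g x ∂(volume.restrict Ω) := fun f g => by
    rw [L2.inner_def]; simp [RCLike.inner_apply, mul_comm]
  constructor
  · intro hsub
    -- the key inequality in functional (increment) form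
    have KI : ∀ v ξ : (Fin 3 → ℝ) → ℝ, MemLp v 2 (volume.restrict Ω) →
        MemLp ξ 2 (volume.restrict Ω) →
        (∀ᵐ x ∂(volume.restrict Ω), χ x + ξ x ∈ Icc (0:ℝ) 1) →
        (∫ x, η x * v x ∂(volume.restrict Ω)) + (∫ x, ζ x * ξ x ∂(volume.restrict Ω))
          ≤ (∫ x, (U x + χ x - θΓ) * v x ∂(volume.restrict Ω))
            + (∫ x, (U x + χ x + 1 - 2*θΓ) * ξ x ∂(volume.restrict Ω))
            + (∫ x, 1/2 * (v x + ξ x)^2 ∂(volume.restrict Ω))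
            + ((KΓ * (∫ x, U x ∂(volume.restrict Ω)) + p₀)
                * (∫ x, v x ∂(volume.restrict Ω))
              + (KΓ/2) * (∫ x, v x ∂(volume.restrict Ω))^2) := by
      intro v ξ hv hξ hr
      set vL := hv.toLp v with hvLdef
      set ξL := hξ.toLp ξ with hξLdef
      have hVc : ∀ᵐ x ∂(volume.restrict Ω), (U + vL) x = U x + v x := by
        filter_upwards [Lp.coeFn_add U vL, hv.coeFn_toLp] with x h1 h2
        rw [h1, Pi.add_apply, h2]
      have hΞc : ∀ᵐ x ∂(volume.restrict Ω), (χ + ξL) x = χ x + ξ x := by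
        filter_upwards [Lp.coeFn_add χ ξL, hξ.coeFn_toLp] with x h1 h2
        rw [h1, Pi.add_apply, h2]
      have hΞr : ∀ᵐ x ∂(volume.restrict Ω), (χ + ξL) x ∈ Icc (0:ℝ) 1 := by
        filter_upwards [hΞc, hr] with x h1 h2; rw [h1]; exact h2
      have h := hsub (U + vL) (χ + ξL)
      rw [psi_eval Ω KΓ p₀ θΓ Cψ U χ hχrange, psi_eval Ω KΓ p₀ θΓ Cψ (U + vL) (χ + ξL) hΞr,
        ← EReal.coe_add, EReal.coe_le_coe_iff, add_sub_cancel_left, add_sub_cancel_left,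
        hinner, hinner] at h
      have e1 : ∫ x, η x * vL x ∂(volume.restrict Ω)
          = ∫ x, η x * v x ∂(volume.restrict Ω) := by
        refine integral_congr_ae ?_
        filter_upwards [hv.coeFn_toLp] with x hx; rw [hx]
      have e2 : ∫ x, ζ x * ξL x ∂(volume.restrict Ω)
          = ∫ x, ζ x * ξ x ∂(volume.restrict Ω) := by
        refine integral_congr_ae ?_
        filter_upwards [hξ.coeFn_toLp] with x hx; rw [hx]
      have e3 : ∫ x, ((1 / 2) * ((U + vL) x + (χ + ξL) x - 1) ^ 2
            + ((U + vL) x + 2 * (χ + ξL) x) * (1 - θΓ)) ∂(volume.restrict Ω)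
          = ∫ x, (1/2 * ((U x + v x) + (χ x + ξ x) - 1)^2
            + ((U x + v x) + 2*(χ x + ξ x)) * (1-θΓ)) ∂(volume.restrict Ω) := by
        refine integral_congr_ae ?_
        filter_upwards [hVc, hΞc] with x h1 h2; rw [h1, h2]
      have e4 : ∫ x, (U + vL) x ∂(volume.restrict Ω)
          = ∫ x, (U x + v x) ∂(volume.restrict Ω) := integral_congr_ae hVc
      rw [e1, e2, e3, e4] at h
      have e5 : ∫ x, (U x + v x) ∂(volume.restrict Ω)
          = (∫ x, U x ∂(volume.restrict Ω)) + ∫ x, v x ∂(volume.restrict Ω) :=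
        integral_add iU (hv.integrable one_le_two)
      rw [e5] at h
      have hva : MemLp (fun x => U x + v x) 2 (volume.restrict Ω) := hUm.add hv
      have hξa : MemLp (fun x => χ x + ξ x) 2 (volume.restrict Ω) := hχm.add hξ
      have hm := master θΓ hUm hχm hva hξa
      have m1 : ∫ x, (U x + χ x - θΓ) * ((U x + v x) - U x) ∂(volume.restrict Ω)
          = ∫ x, (U x + χ x - θΓ) * v x ∂(volume.restrict Ω) := by
        congr 1; funext x; ring
      have m2 : ∫ x, (U x + χ x + 1 - 2*θΓ) * ((χ x + ξ x) - χ x) ∂(volume.restrict Ω)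
          = ∫ x, (U x + χ x + 1 - 2*θΓ) * ξ x ∂(volume.restrict Ω) := by
        congr 1; funext x; ring
      have m3 : ∫ x, 1/2 * (((U x + v x) - U x) + ((χ x + ξ x) - χ x))^2 ∂(volume.restrict Ω)
          = ∫ x, 1/2 * (v x + ξ x)^2 ∂(volume.restrict Ω) := by
        congr 1; funext x; ring
      rw [m1, m2, m3] at hm
      have hF : (KΓ / 2) * (((∫ x, U x ∂(volume.restrict Ω))
            + ∫ x, v x ∂(volume.restrict Ω)) + p₀ / KΓ) ^ 2
          = (KΓ / 2) * ((∫ x, U x ∂(volume.restrict Ω)) + p₀ / KΓ) ^ 2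
            + ((KΓ * (∫ x, U x ∂(volume.restrict Ω)) + p₀)
                * (∫ x, v x ∂(volume.restrict Ω))
              + (KΓ/2) * (∫ x, v x ∂(volume.restrict Ω))^2) := by
        field_simp
        ring
      linarith [h, hm, hF]
    refine ⟨?_, ?_⟩
    · -- the η identification
      obtain ⟨cU, hcU⟩ : ∃ c : ℝ, c = KΓ * (∫ x, U x ∂(volume.restrict Ω)) + p₀ :=
        ⟨_, rfl⟩
      have hle : ∀ vv : (Fin 3 → ℝ) → ℝ, MemLp vv 2 (volume.restrict Ω) →
          ∫ x, η x * vv x ∂(volume.restrict Ω) ≤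
            (∫ x, (U x + χ x - θΓ) * vv x ∂(volume.restrict Ω))
              + cU * (∫ x, vv x ∂(volume.restrict Ω)) := by
        intro vv hvv
        have hS0 : 0 ≤ ∫ x, 1/2 * (vv x)^2 ∂(volume.restrict Ω) :=
          integral_nonneg fun x => by positivity
        obtain ⟨B, hBdef⟩ : ∃ b : ℝ, b = (∫ x, 1/2 * (vv x)^2 ∂(volume.restrict Ω))
            + (KΓ/2) * (∫ x, vv x ∂(volume.restrict Ω))^2 := ⟨_, rfl⟩
        have hB : 0 ≤ B := by
          rw [hBdef]
          have h9 : 0 ≤ (KΓ/2) * (∫ x, vv x ∂(volume.restrict Ω))^2 := by positivity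
          linarith
        have hstep : ∀ t : ℝ, 0 < t →
            (∫ x, η x * vv x ∂(volume.restrict Ω))
              - ((∫ x, (U x + χ x - θΓ) * vv x ∂(volume.restrict Ω))
                + cU * (∫ x, vv x ∂(volume.restrict Ω))) ≤ t * B := by
          intro t ht
          have hKI := KI (fun x => t * vv x) (fun _ => 0) (hvv.const_mul t)
            (memLp_const 0) (by filter_upwards [hχrange] with x hx; simpa using hx)
          simp only [mul_zero, add_zero, integral_zero] at hKI
          have s1 : ∫ x, η x * (t * vv x) ∂(volume.restrict Ω)
              = t * ∫ x, η x * vv x ∂(volume.restrict Ω) := by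
            rw [← integral_const_mul]; congr 1; funext x; ring
          have s2 : ∫ x, (U x + χ x - θΓ) * (t * vv x) ∂(volume.restrict Ω)
              = t * ∫ x, (U x + χ x - θΓ) * vv x ∂(volume.restrict Ω) := by
            rw [← integral_const_mul]; congr 1; funext x; ring
          have s3 : ∫ x, 1/2 * (t * vv x)^2 ∂(volume.restrict Ω)
              = t^2 * ∫ x, 1/2 * (vv x)^2 ∂(volume.restrict Ω) := by
            rw [← integral_const_mul]; congr 1; funext x; ring
          have s4 : ∫ x, t * vv x ∂(volume.restrict Ω)
              = t * ∫ x, vv x ∂(volume.restrict Ω) := integral_const_mul t _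
          rw [s1, s2, s3, s4, ← hcU] at hKI
          have h2 : t * (∫ x, η x * vv x ∂(volume.restrict Ω))
              ≤ t * (((∫ x, (U x + χ x - θΓ) * vv x ∂(volume.restrict Ω))
                + cU * (∫ x, vv x ∂(volume.restrict Ω))) + t * B) := by
            calc t * (∫ x, η x * vv x ∂(volume.restrict Ω))
                ≤ t * (∫ x, (U x + χ x - θΓ) * vv x ∂(volume.restrict Ω))
                  + t ^ 2 * (∫ x, 1/2 * (vv x)^2 ∂(volume.restrict Ω))
                  + (cU * (t * (∫ x, vv x ∂(volume.restrict Ω)))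
                    + KΓ / 2 * (t * (∫ x, vv x ∂(volume.restrict Ω))) ^ 2) := hKI
              _ = t * (((∫ x, (U x + χ x - θΓ) * vv x ∂(volume.restrict Ω))
                + cU * (∫ x, vv x ∂(volume.restrict Ω))) + t * B) := by
                  rw [hBdef]; ring
          linarith [le_of_mul_le_mul_left h2 ht]
        refine le_of_forall_pos_le_add fun ε hε => ?_
        have ht : (0:ℝ) < ε / (B + 1) := div_pos hε (by linarith)
        have h := hstep _ ht
        have : ε / (B + 1) * B ≤ ε := by
          rw [div_mul_eq_mul_div, div_le_iff₀ (by linarith : (0:ℝ) < B + 1)]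
          nlinarith
        linarith
      have heq : ∀ vv : (Fin 3 → ℝ) → ℝ, MemLp vv 2 (volume.restrict Ω) →
          ∫ x, η x * vv x ∂(volume.restrict Ω) =
            (∫ x, (U x + χ x - θΓ) * vv x ∂(volume.restrict Ω))
              + cU * (∫ x, vv x ∂(volume.restrict Ω)) := by
        intro vv hvv
        refine le_antisymm (hle vv hvv) ?_
        have h2 := hle (fun x => -vv x) hvv.neg
        have n1 : ∫ x, η x * (-vv x) ∂(volume.restrict Ω)
            = -∫ x, η x * vv x ∂(volume.restrict Ω) := by
          rw [← integral_neg]; congr 1; funext x; ring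
        have n2 : ∫ x, (U x + χ x - θΓ) * (-vv x) ∂(volume.restrict Ω)
            = -∫ x, (U x + χ x - θΓ) * vv x ∂(volume.restrict Ω) := by
          rw [← integral_neg]; congr 1; funext x; ring
        have n3 : ∫ x, -vv x ∂(volume.restrict Ω)
            = -∫ x, vv x ∂(volume.restrict Ω) := integral_neg _
        rw [n1, n2, n3] at h2
        linarith
      have hρmem : MemLp (fun x => η x - (U x + χ x - θΓ + cU)) 2 (volume.restrict Ω) :=
        hηm.sub (hw1.add (memLp_const cU))
      have h0 := heq _ hρmem
      have i1 : Integrable (fun x => η x * (η x - (U x + χ x - θΓ + cU)))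
          (volume.restrict Ω) := intmul hηm hρmem
      have i2 : Integrable (fun x => (U x + χ x - θΓ) * (η x - (U x + χ x - θΓ + cU)))
          (volume.restrict Ω) := intmul hw1 hρmem
      have i3 : Integrable (fun x => cU * (η x - (U x + χ x - θΓ + cU)))
          (volume.restrict Ω) := (hρmem.integrable one_le_two).const_mul cU
      have hsq : ∫ x, (η x - (U x + χ x - θΓ + cU)) * (η x - (U x + χ x - θΓ + cU))
          ∂(volume.restrict Ω) = 0 := by
        have e : (fun x => (η x - (U x + χ x - θΓ + cU)) * (η x - (U x + χ x - θΓ + cU)))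
            = fun x => η x * (η x - (U x + χ x - θΓ + cU))
              - ((U x + χ x - θΓ) * (η x - (U x + χ x - θΓ + cU))
                + cU * (η x - (U x + χ x - θΓ + cU))) := funext fun x => by ring
        have i23 : Integrable (fun x => (U x + χ x - θΓ) * (η x - (U x + χ x - θΓ + cU))
            + cU * (η x - (U x + χ x - θΓ + cU))) (volume.restrict Ω) := i2.add i3
        rw [e, integral_sub i1 i23, integral_add i2 i3, integral_const_mul]
        linarith [h0]
      have hnn : 0 ≤ᵐ[volume.restrict Ω]
          fun x => (η x - (U x + χ x - θΓ + cU)) * (η x - (U x + χ x - θΓ + cU)) :=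
        Filter.Eventually.of_forall fun x => mul_self_nonneg _
      have hzero := (integral_eq_zero_iff_of_nonneg_ae hnn (intmul hρmem hρmem)).mp hsq
      filter_upwards [hzero] with x hx
      have hx' : (η x - (U x + χ x - θΓ + cU)) * (η x - (U x + χ x - θΓ + cU)) = 0 := hx
      have := mul_self_eq_zero.mp hx'
      rw [hcU] at this
      linarith
    · -- the ζ identification
      have hρ2 : MemLp (fun x => ζ x - (U x + χ x + 1 - 2*θΓ)) 2 (volume.restrict Ω) :=
        hζm.sub hw2
      have key2 : ∀ g : (Fin 3 → ℝ) → ℝ, MemLp g 2 (volume.restrict Ω) →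
          (∀ᵐ x ∂(volume.restrict Ω), g x ∈ Icc (0:ℝ) 1) →
          ∫ x, (ζ x - (U x + χ x + 1 - 2*θΓ)) * (g x - χ x) ∂(volume.restrict Ω)
            ≤ (1/2) * ∫ x, (g x - χ x)^2 ∂(volume.restrict Ω) := by
        intro g hg hgr
        have hξmem : MemLp (fun x => g x - χ x) 2 (volume.restrict Ω) := hg.sub hχm
        have hKI := KI (fun _ => 0) (fun x => g x - χ x) (memLp_const 0) hξmem
          (by filter_upwards [hgr] with x hx
              show χ x + (g x - χ x) ∈ Icc (0:ℝ) 1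
              have he : χ x + (g x - χ x) = g x := by ring
              rw [he]; exact hx)
        have z1 : ∫ x, η x * (0:ℝ) ∂(volume.restrict Ω) = 0 := by simp
        have z2 : ∫ x, (U x + χ x - θΓ) * (0:ℝ) ∂(volume.restrict Ω) = 0 := by simp
        have z3 : ∫ x, (0:ℝ) ∂(volume.restrict Ω) = 0 := integral_zero _ _
        rw [z1, z2, z3] at hKI
        have z4 : ∫ x, 1/2 * ((0:ℝ) + (g x - χ x))^2 ∂(volume.restrict Ω)
            = ∫ x, 1/2 * (g x - χ x)^2 ∂(volume.restrict Ω) := by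
          congr 1; funext x; ring
        rw [z4] at hKI
        have hsplit : ∫ x, (ζ x - (U x + χ x + 1 - 2*θΓ)) * (g x - χ x) ∂(volume.restrict Ω)
            = (∫ x, ζ x * (g x - χ x) ∂(volume.restrict Ω))
              - ∫ x, (U x + χ x + 1 - 2*θΓ) * (g x - χ x) ∂(volume.restrict Ω) := by
          rw [← integral_sub (intmul hζm hξmem) (intmul hw2 hξmem)]
          congr 1; funext x; ring
        have t3eq : ∫ x, 1/2 * (g x - χ x)^2 ∂(volume.restrict Ω)
            = (1/2) * ∫ x, (g x - χ x)^2 ∂(volume.restrict Ω) := integral_const_mul _ _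
        rw [hsplit]
        linarith [hKI, t3eq]
      have hy1 := step2 hρ2 hχm hχrange 1 ⟨zero_le_one, le_refl 1⟩ key2
      have hy0 := step2 hρ2 hχm hχrange 0 ⟨le_refl 0, zero_le_one⟩ key2
      filter_upwards [hy1, hy0] with x hx1 hx0
      intro y hy
      have hx1' : (ζ x - (U x + χ x + 1 - 2*θΓ)) * (1 - χ x) ≤ 0 := hx1
      have hx0' : (ζ x - (U x + χ x + 1 - 2*θΓ)) * (0 - χ x) ≤ 0 := hx0
      nlinarith [hx1', hx0', hy.1, hy.2]
  · rintro ⟨hη, hζ⟩ V Ξ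
    by_cases hΞ : ∀ᵐ x ∂(volume.restrict Ω), Ξ x ∈ Icc (0:ℝ) 1
    · have hV := Lp.memLp V
      have hΞm := Lp.memLp Ξ
      rw [psi_eval Ω KΓ p₀ θΓ Cψ U χ hχrange, psi_eval Ω KΓ p₀ θΓ Cψ V Ξ hΞ,
        ← EReal.coe_add, EReal.coe_le_coe_iff, hinner, hinner]
      have e1 : ∫ x, η x * (V - U) x ∂(volume.restrict Ω)
          = ∫ x, η x * (V x - U x) ∂(volume.restrict Ω) := by
        refine integral_congr_ae ?_
        filter_upwards [Lp.coeFn_sub V U] with x hx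
        rw [hx, Pi.sub_apply]
      have e2 : ∫ x, ζ x * (Ξ - χ) x ∂(volume.restrict Ω)
          = ∫ x, ζ x * (Ξ x - χ x) ∂(volume.restrict Ω) := by
        refine integral_congr_ae ?_
        filter_upwards [Lp.coeFn_sub Ξ χ] with x hx
        rw [hx, Pi.sub_apply]
      rw [e1, e2]
      have hm := master θΓ hUm hχm hV hΞm
      have hvu : MemLp (fun x => V x - U x) 2 (volume.restrict Ω) := hV.sub hUm
      have hξc : MemLp (fun x => Ξ x - χ x) 2 (volume.restrict Ω) := hΞm.sub hχm
      have hA1 : ∫ x, η x * (V x - U x) ∂(volume.restrict Ω)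
          = (∫ x, (U x + χ x - θΓ) * (V x - U x) ∂(volume.restrict Ω))
            + (KΓ * (∫ x, U x ∂(volume.restrict Ω)) + p₀)
              * ((∫ x, V x ∂(volume.restrict Ω)) - (∫ x, U x ∂(volume.restrict Ω))) := by
        have c1 : ∫ x, η x * (V x - U x) ∂(volume.restrict Ω)
            = ∫ x, ((U x + χ x - θΓ) * (V x - U x)
              + (KΓ * (∫ x', U x' ∂(volume.restrict Ω)) + p₀) * (V x - U x))
              ∂(volume.restrict Ω) := by
          refine integral_congr_ae ?_
          filter_upwards [hη] with x hx
          rw [hx]; ring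
        have i1 : Integrable (fun x => (U x + χ x - θΓ) * (V x - U x))
          (volume.restrict Ω) := intmul hw1 hvu
        have i2 : Integrable (fun x => (KΓ * (∫ x', U x' ∂(volume.restrict Ω)) + p₀)
            * (V x - U x)) (volume.restrict Ω) := (hvu.integrable one_le_two).const_mul _
        rw [c1, integral_add i1 i2, integral_const_mul,
          integral_sub (hV.integrable one_le_two) iU]
      have hA2 : ∫ x, ζ x * (Ξ x - χ x) ∂(volume.restrict Ω)
          = (∫ x, (U x + χ x + 1 - 2*θΓ) * (Ξ x - χ x) ∂(volume.restrict Ω))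
            + ∫ x, (ζ x - (U x + χ x + 1 - 2*θΓ)) * (Ξ x - χ x) ∂(volume.restrict Ω) := by
        have hρ2b : MemLp (fun x => ζ x - (U x + χ x + 1 - 2*θΓ)) 2 (volume.restrict Ω) :=
          hζm.sub hw2
        rw [← integral_add (intmul hw2 hξc) (intmul hρ2b hξc)]
        congr 1; funext x; ring
      have hneg : ∫ x, (ζ x - (U x + χ x + 1 - 2*θΓ)) * (Ξ x - χ x)
          ∂(volume.restrict Ω) ≤ 0 := by
        refine integral_nonpos_of_ae ?_
        filter_upwards [hζ, hΞ] with x h1 h2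
        exact h1 (Ξ x) h2
      have hT3 : 0 ≤ ∫ x, 1/2 * ((V x - U x) + (Ξ x - χ x))^2 ∂(volume.restrict Ω) :=
        integral_nonneg fun x => by positivity
      have hF : (KΓ / 2) * ((∫ x, V x ∂(volume.restrict Ω)) + p₀ / KΓ) ^ 2
          = (KΓ / 2) * ((∫ x, U x ∂(volume.restrict Ω)) + p₀ / KΓ) ^ 2
            + ((KΓ * (∫ x, U x ∂(volume.restrict Ω)) + p₀)
              * ((∫ x, V x ∂(volume.restrict Ω)) - (∫ x, U x ∂(volume.restrict Ω)))
              + (KΓ/2) * ((∫ x, V x ∂(volume.restrict Ω))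
                - (∫ x, U x ∂(volume.restrict Ω)))^2) := by
        field_simp
        ring
      have hG2 : 0 ≤ (KΓ/2) * ((∫ x, V x ∂(volume.restrict Ω))
          - (∫ x, U x ∂(volume.restrict Ω)))^2 := by positivity
      linarith [hm, hA1, hA2, hneg, hT3, hF, hG2]
    · rw [psi_top Ω KΓ p₀ θΓ Cψ V Ξ hΞ]
      exact le_top
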